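/- Let A : X → Y and B, C : Y → X be bounded linear operators between Banach spaces satisfying A(BA)² = ABACA = ACABA = (AC)²A. Then for all n ∈ ℕ, the subspace R(AC−I) + N((AC−I)^n) is closed in Y if and only if R(BA−I) + N((BA−I)^n) is closed in X. In particular, R(AC−I) is closed if and only if R(BA−I) is closed. -/

import Mathlib

open Polynomial ContinuousLinearMap

section aux
variable {X Y : Type*} [NormedAddCommGroup X] [NormedSpace ℂ X]
  [NormedAddCommGroup Y] [NormedSpace ℂ Y]

lemma commPow (U : Y →L[ℂ] X) (σ : Y →L[ℂ] Y) (τ : X →L[ℂ] X)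
    (h : ∀ x, U (σ x) = τ (U x)) (n : ℕ) : ∀ x, U ((σ ^ n) x) = (τ ^ n) (U x) := by
  induction n with
  | zero => intro x; simp
  | succ n ih =>
    intro x
    rw [pow_succ, pow_succ]
    simp only [mul_apply_eq_comp]
    rw [ih, h]

lemma key (σ : Y →L[ℂ] Y) (τ : X →L[ℂ] X) (U : Y →L[ℂ] X) (V : X →L[ℂ] Y)
    (W : Y →L[ℂ] Y)
    (hU : ∀ x, U (σ x) = τ (U x)) (hV : ∀ x, V (τ x) = σ (V x))
    (hVU : ∀ y, V (U y) = y + σ (W y)) (n : ℕ)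
    (hX : IsClosed ((LinearMap.range (τ : X →ₗ[ℂ] X) ⊔ LinearMap.ker ((τ ^ n : X →L[ℂ] X) : X →ₗ[ℂ] X) : Submodule ℂ X) : Set X)) :
    IsClosed ((LinearMap.range (σ : Y →ₗ[ℂ] Y) ⊔ LinearMap.ker ((σ ^ n : Y →L[ℂ] Y) : Y →ₗ[ℂ] Y) : Submodule ℂ Y) : Set Y) := by
  set SY := (LinearMap.range (σ : Y →ₗ[ℂ] Y) ⊔ LinearMap.ker ((σ ^ n : Y →L[ℂ] Y) : Y →ₗ[ℂ] Y) : Submodule ℂ Y) with hSY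
  set SX := (LinearMap.range (τ : X →ₗ[ℂ] X) ⊔ LinearMap.ker ((τ ^ n : X →L[ℂ] X) : X →ₗ[ℂ] X) : Submodule ℂ X) with hSX
  have hUn := commPow U σ τ hU n
  have hVn := commPow V τ σ hV n
  have himg : U '' (SY : Set Y) ⊆ (SX : Set X) := by
    rintro _ ⟨z, hz, rfl⟩
    rcases Submodule.mem_sup.mp hz with ⟨a, ha, b, hb, rfl⟩
    rcases ha with ⟨c, rfl⟩
    rw [ContinuousLinearMap.coe_coe]
    have hrw : U (σ c + b) = τ (U c) + U b := by rw [map_add, hU]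
    rw [SetLike.mem_coe, hrw]
    refine Submodule.mem_sup.mpr ⟨τ (U c), ⟨U c, rfl⟩, U b, ?_, rfl⟩
    rw [LinearMap.mem_ker, ContinuousLinearMap.coe_coe] at hb ⊢
    rw [← hUn, hb, map_zero]
  refine isClosed_of_closure_subset fun y hy => ?_
  have h1 : U y ∈ closure (U '' (SY : Set Y)) :=
    image_closure_subset_closure_image U.continuous ⟨y, hy, rfl⟩
  have h2 : U y ∈ (SX : Set X) := by
    have := closure_mono himg h1
    rwa [hX.closure_eq] at this
  rcases Submodule.mem_sup.mp h2 with ⟨a, ⟨c, rfl⟩, b, hb, hab⟩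
  rw [ContinuousLinearMap.coe_coe] at hab
  have hkey : σ (V c) + V b = y + σ (W y) := by
    rw [← hV, ← map_add, hab, hVU]
  have hy' : y = σ (V c) + V b - σ (W y) := by
    rw [hkey]; abel
  rw [SetLike.mem_coe, hy']
  have m1 : σ (V c) ∈ SY := Submodule.mem_sup_left ⟨V c, rfl⟩
  have m2 : V b ∈ SY := by
    refine Submodule.mem_sup_right ?_
    rw [LinearMap.mem_ker, ContinuousLinearMap.coe_coe] at hb ⊢
    rw [← hVn, hb, map_zero]
  have m3 : σ (W y) ∈ SY := Submodule.mem_sup_left ⟨W y, rfl⟩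
  exact SY.sub_mem (SY.add_mem m1 m2) m3

end aux

variable {X Y : Type*} [NormedAddCommGroup X] [NormedSpace ℂ X] [CompleteSpace X]
  [NormedAddCommGroup Y] [NormedSpace ℂ Y] [CompleteSpace Y]
theorem stmt12 (A : X →L[ℂ] Y) (B C : Y →L[ℂ] X)
    (h1 : A ∘L B ∘L A ∘L B ∘L A = A ∘L B ∘L A ∘L C ∘L A)
    (h2 : A ∘L B ∘L A ∘L C ∘L A = A ∘L C ∘L A ∘L B ∘L A)
    (h3 : A ∘L C ∘L A ∘L B ∘L A = A ∘L C ∘L A ∘L C ∘L A) :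
    (∀ n : ℕ,
      IsClosed ((LinearMap.range ((A ∘L C - 1 : Y →L[ℂ] Y) : Y →ₗ[ℂ] Y) ⊔
          LinearMap.ker (((A ∘L C - 1) ^ n : Y →L[ℂ] Y) : Y →ₗ[ℂ] Y) :
          Submodule ℂ Y) : Set Y) ↔
        IsClosed ((LinearMap.range ((B ∘L A - 1 : X →L[ℂ] X) : X →ₗ[ℂ] X) ⊔
          LinearMap.ker (((B ∘L A - 1) ^ n : X →L[ℂ] X) : X →ₗ[ℂ] X) :
          Submodule ℂ X) : Set X)) ∧
    (IsClosed ((LinearMap.range ((A ∘L C - 1 : Y →L[ℂ] Y) : Y →ₗ[ℂ] Y) : Submodule ℂ Y) : Set Y) ↔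
      IsClosed ((LinearMap.range ((B ∘L A - 1 : X →L[ℂ] X) : X →ₗ[ℂ] X) : Submodule ℂ X) : Set X)) := by
  have _hcX : CompleteSpace X := inferInstance
  have _hcY : CompleteSpace Y := inferInstance
  have h1p : ∀ x : X, A (B (A (B (A x)))) = A (B (A (C (A x)))) := fun x => by
    have := DFunLike.congr_fun h1 x; simpa [comp_apply] using this
  have h2p : ∀ x : X, A (B (A (C (A x)))) = A (C (A (B (A x)))) := fun x => by
    have := DFunLike.congr_fun h2 x; simpa [comp_apply] using this
  have h3p : ∀ x : X, A (C (A (B (A x)))) = A (C (A (C (A x)))) := fun x => by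
    have := DFunLike.congr_fun h3 x; simpa [comp_apply] using this
  have hU : ∀ y : Y, (B ∘L A ∘L B ∘L A ∘L C) ((A ∘L C - 1) y)
      = (B ∘L A - 1) ((B ∘L A ∘L B ∘L A ∘L C) y) := by
    intro y
    simp only [comp_apply, sub_apply, one_apply_eq_self, map_sub, h1p, h2p, h3p]
  have hV : ∀ x : X, (A ∘L B ∘L A) ((B ∘L A - 1) x)
      = (A ∘L C - 1) ((A ∘L B ∘L A) x) := by
    intro x
    simp only [comp_apply, sub_apply, one_apply_eq_self, map_sub, h1p, h2p, h3p]
  have hqring : (A ∘L C) ^ 4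
      = 1 + (A ∘L C - 1) * ((A ∘L C) ^ 3 + (A ∘L C) ^ 2 + (A ∘L C) + 1) := by
    noncomm_ring
  have hpring : (B ∘L A) ^ 4
      = 1 + (B ∘L A - 1) * ((B ∘L A) ^ 3 + (B ∘L A) ^ 2 + (B ∘L A) + 1) := by
    noncomm_ring
  have hq4 : ∀ y : Y, (A ∘L B ∘L A) ((B ∘L A ∘L B ∘L A ∘L C) y) = ((A ∘L C) ^ 4) y := by
    intro y
    have hr : ((A ∘L C) ^ 4) y = A (C (A (C (A (C (A (C y))))))) := by
      simp only [pow_succ, pow_zero, one_mul, mul_apply_eq_comp, comp_apply]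
    rw [hr]
    simp only [comp_apply, h1p, h2p, h3p]
  have hp4 : ∀ x : X, (B ∘L A ∘L B ∘L A ∘L C) ((A ∘L B ∘L A) x) = ((B ∘L A) ^ 4) x := by
    intro x
    have hr : ((B ∘L A) ^ 4) x = B (A (B (A (B (A (B (A x))))))) := by
      simp only [pow_succ, pow_zero, one_mul, mul_apply_eq_comp, comp_apply]
    rw [hr]
    simp only [comp_apply, h1p, h2p, h3p]
  have hVU : ∀ y : Y, (A ∘L B ∘L A) ((B ∘L A ∘L B ∘L A ∘L C) y)
      = y + (A ∘L C - 1) ((((A ∘L C) ^ 3 + (A ∘L C) ^ 2 + (A ∘L C) + 1) : Y →L[ℂ] Y) y) := by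
    intro y
    rw [hq4, hqring]
    simp only [add_apply, mul_apply_eq_comp, one_apply_eq_self]
  have hUV : ∀ x : X, (B ∘L A ∘L B ∘L A ∘L C) ((A ∘L B ∘L A) x)
      = x + (B ∘L A - 1) ((((B ∘L A) ^ 3 + (B ∘L A) ^ 2 + (B ∘L A) + 1) : X →L[ℂ] X) x) := by
    intro x
    rw [hp4, hpring]
    simp only [add_apply, mul_apply_eq_comp, one_apply_eq_self]
  have main : ∀ n : ℕ,
      IsClosed ((LinearMap.range ((A ∘L C - 1 : Y →L[ℂ] Y) : Y →ₗ[ℂ] Y) ⊔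
          LinearMap.ker (((A ∘L C - 1) ^ n : Y →L[ℂ] Y) : Y →ₗ[ℂ] Y) :
          Submodule ℂ Y) : Set Y) ↔
        IsClosed ((LinearMap.range ((B ∘L A - 1 : X →L[ℂ] X) : X →ₗ[ℂ] X) ⊔
          LinearMap.ker (((B ∘L A - 1) ^ n : X →L[ℂ] X) : X →ₗ[ℂ] X) :
          Submodule ℂ X) : Set X) := by
    intro n
    constructor
    · intro hY
      exact key (B ∘L A - 1) (A ∘L C - 1) (A ∘L B ∘L A) (B ∘L A ∘L B ∘L A ∘L C)
        ((B ∘L A) ^ 3 + (B ∘L A) ^ 2 + (B ∘L A) + 1) hV hU hUV n hY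
    · intro hX
      exact key (A ∘L C - 1) (B ∘L A - 1) (B ∘L A ∘L B ∘L A ∘L C) (A ∘L B ∘L A)
        ((A ∘L C) ^ 3 + (A ∘L C) ^ 2 + (A ∘L C) + 1) hU hV hVU n hX
  refine ⟨main, ?_⟩
  have h0 := main 0
  have hk1 : LinearMap.ker (((A ∘L C - 1) ^ 0 : Y →L[ℂ] Y) : Y →ₗ[ℂ] Y) = (⊥ : Submodule ℂ Y) := by
    rw [pow_zero]
    ext x
    simp [LinearMap.mem_ker, one_apply_eq_self]
  have hk2 : LinearMap.ker (((B ∘L A - 1) ^ 0 : X →L[ℂ] X) : X →ₗ[ℂ] X) = (⊥ : Submodule ℂ X) := by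
    rw [pow_zero]
    ext x
    simp [LinearMap.mem_ker, one_apply_eq_self]
  rwa [hk1, hk2, sup_bot_eq, sup_bot_eq] at h0
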